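/- Fix real numbers λ > 0 and a < 0, b < 0. For k ∈ (−1,1), let θ₀(k) be the unique θ ∈ (0, π) with (k−1)·√(ab/λ)·cos(θ) = (k·b/λ + a)·sin(θ). Then the function k ↦ θ₀(k) is strictly decreasing on (−1,1), and sup{θ₀(k) : k ∈ (−1,1)} = θ*, where θ* is the unique θ ∈ (0, π) with cos(θ)·2√(λab) = (b − λa)·sin(θ). Consequently, the supremum over k ∈ (−1,1) of the smallest positive L with F_{a,b,λ,k,L}(0) = 0 equals √(λ/(ab))·θ*. -/

import Mathlib

/-- The branch `η(σ)` of the square root of `((λ+1)²σ² − 4λab)/(4λ²)` given by the principal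
complex power; its square is always `((λ+1)²σ² − 4λab)/(4λ²)`. -/
noncomputable def charEta (lam a b : ℝ) (σ : ℂ) : ℂ :=
  ((((lam : ℂ) + 1) ^ 2 * σ ^ 2 - 4 * (lam : ℂ) * a * b) / (4 * (lam : ℂ) ^ 2)) ^ ((1 : ℂ) / 2)

open Classical in
/-- The characteristic function `F_{a,b,λ,k,L}(σ) = (k−1)cosh(ηL) −
((k+1)((λ+1)/(2λ))σ + (kb/λ + a))·sinh(ηL)/η`, with `sinh(ηL)/η` interpreted as `L` when
`η = 0`.  The value does not depend on the choice of the square root `η`. -/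
noncomputable def Fchar (lam a b k L : ℝ) (σ : ℂ) : ℂ :=
  ((k : ℂ) - 1) * Complex.cosh (charEta lam a b σ * L) -
    (((k : ℂ) + 1) * (((lam : ℂ) + 1) / (2 * (lam : ℂ))) * σ + ((k : ℂ) * b / lam + a)) *
      (if charEta lam a b σ = 0 then (L : ℂ)
       else Complex.sinh (charEta lam a b σ * L) / charEta lam a b σ)

/-- For `λ > 0`, `a < 0`, `b < 0`, the marginal angle `θ₀(k)` (the unique
`θ ∈ (0,π)` with `(k−1)√(ab/λ)cos θ = (kb/λ+a)sin θ`) is strictly decreasing in `k ∈ (−1,1)`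
with supremum `θ*`, the unique `θ ∈ (0,π)` with `cos θ · 2√(λab) = (b−λa)·sin θ`;
consequently the supremum over `k ∈ (−1,1)` of the smallest positive `L` with
`F_{a,b,λ,k,L}(0) = 0` equals `√(λ/(ab))·θ*`. -/
lemma theta_eq_aux {θ p q : ℝ} (hθ : θ ∈ Set.Ioo 0 Real.pi) (hp : p ≠ 0)
    (h : p * Real.cos θ = q * Real.sin θ) : θ = Real.pi/2 - Real.arctan (q/p) := by
  have hs : 0 < Real.sin θ := Real.sin_pos_of_pos_of_lt_pi hθ.1 hθ.2
  have htan : Real.tan (Real.pi/2 - θ) = q/p := by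
    rw [Real.tan_pi_div_two_sub, Real.tan_eq_sin_div_cos, inv_div,
      div_eq_div_iff hs.ne' hp]
    linear_combination h
  have h2 := Real.arctan_tan (x := Real.pi/2 - θ) (by linarith [hθ.2]) (by linarith [hθ.1])
  rw [htan] at h2; linarith

lemma theta_sol_aux (p q : ℝ) (hp : p ≠ 0) :
    (Real.pi/2 - Real.arctan (q/p)) ∈ Set.Ioo 0 Real.pi ∧
      p * Real.cos (Real.pi/2 - Real.arctan (q/p)) =
        q * Real.sin (Real.pi/2 - Real.arctan (q/p)) := by
  constructor
  · constructor
    · linarith [Real.arctan_lt_pi_div_two (q/p), Real.pi_pos]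
    · linarith [Real.neg_pi_div_two_lt_arctan (q/p), Real.pi_pos]
  · rw [Real.cos_pi_div_two_sub, Real.sin_pi_div_two_sub]
    have hc : Real.cos (Real.arctan (q/p)) ≠ 0 := (Real.cos_arctan_pos _).ne'
    have : Real.sin (Real.arctan (q/p)) = (q/p) * Real.cos (Real.arctan (q/p)) := by
      have := Real.tan_arctan (q/p)
      rw [Real.tan_eq_sin_div_cos] at this
      field_simp at this ⊢
      linear_combination this
    rw [this]; field_simp

lemma fchar_zero (lam a b : ℝ) (hlam : 0 < lam) (ha : a < 0) (hb : b < 0) (k L : ℝ) :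
    Fchar lam a b k L 0 =
      (((k - 1) * Real.cos (Real.sqrt (a*b/lam) * L)
        - (k * b / lam + a) * Real.sin (Real.sqrt (a*b/lam) * L) / Real.sqrt (a*b/lam) : ℝ) : ℂ) := by
  have hab : 0 < a * b / lam := div_pos (mul_pos_of_neg_of_neg ha hb) hlam
  set ω := Real.sqrt (a*b/lam) with hωdef
  have hω : 0 < ω := Real.sqrt_pos.mpr hab
  have hlamC : (lam : ℂ) ≠ 0 := Complex.ofReal_ne_zero.mpr hlam.ne'
  have hbase : (((lam : ℂ) + 1) ^ 2 * (0:ℂ) ^ 2 - 4 * (lam : ℂ) * a * b) / (4 * (lam : ℂ) ^ 2)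
      = ((-(a*b/lam) : ℝ) : ℂ) := by
    push_cast
    field_simp
    ring
  have hsq : (charEta lam a b 0) ^ 2 = ((-(a*b/lam) : ℝ) : ℂ) := by
    rw [charEta, hbase]
    have h2 : ((1:ℂ)/2) = (((2:ℕ) : ℂ))⁻¹ := by norm_num
    rw [h2]
    exact Complex.cpow_nat_inv_pow _ two_ne_zero
  have hsq2 : (charEta lam a b 0) ^ 2 = (Complex.I * ω) ^ 2 := by
    rw [hsq]
    have : (ω:ℂ)^2 = ((a*b/lam : ℝ) : ℂ) := by
      norm_cast
      rw [hωdef, Real.sq_sqrt hab.le]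
    rw [mul_pow, Complex.I_sq, this]
    push_cast
    ring
  have hne : charEta lam a b 0 ≠ 0 := by
    intro h
    rw [h] at hsq
    simp only [ne_eq, zero_pow, OfNat.ofNat_ne_zero, not_false_iff] at hsq
    have : (-(a*b/lam) : ℝ) = 0 := by exact_mod_cast hsq.symm
    linarith
  have hcases : charEta lam a b 0 = Complex.I * ω ∨ charEta lam a b 0 = -(Complex.I * ω) :=
    (Commute.all _ _).sq_eq_sq_iff_eq_or_eq_neg.mp hsq2
  have hωC : (ω : ℂ) ≠ 0 := Complex.ofReal_ne_zero.mpr hω.ne'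
  rw [Fchar, if_neg hne]
  rcases hcases with h | h <;> rw [h]
  · have hmul : Complex.I * (ω:ℂ) * (L:ℂ) = ((ω * L : ℝ) : ℂ) * Complex.I := by
      push_cast; ring
    rw [hmul, Complex.cosh_mul_I, Complex.sinh_mul_I, ← Complex.ofReal_cos, ← Complex.ofReal_sin]
    push_cast
    field_simp
    ring
  · have hmul : -(Complex.I * (ω:ℂ)) * (L:ℂ) = (-(ω * L : ℝ) : ℂ) * Complex.I := by
      push_cast; ring
    rw [hmul, Complex.cosh_mul_I, Complex.sinh_mul_I, Complex.cos_neg, Complex.sin_neg,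
      ← Complex.ofReal_cos, ← Complex.ofReal_sin]
    push_cast
    field_simp
    ring

theorem stmt_14 (lam a b : ℝ) (hlam : 0 < lam) (ha : a < 0) (hb : b < 0)
    (θ₀ : ℝ → ℝ)
    (hθ : ∀ k ∈ Set.Ioo (-1 : ℝ) 1, θ₀ k ∈ Set.Ioo 0 Real.pi ∧
      (k - 1) * Real.sqrt (a * b / lam) * Real.cos (θ₀ k) =
        (k * b / lam + a) * Real.sin (θ₀ k)) :
    StrictAntiOn θ₀ (Set.Ioo (-1 : ℝ) 1) ∧
    (∃! θs : ℝ, θs ∈ Set.Ioo 0 Real.pi ∧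
      Real.cos θs * (2 * Real.sqrt (lam * a * b)) = (b - lam * a) * Real.sin θs) ∧
    (∀ θs : ℝ, θs ∈ Set.Ioo 0 Real.pi →
      Real.cos θs * (2 * Real.sqrt (lam * a * b)) = (b - lam * a) * Real.sin θs →
      sSup (θ₀ '' Set.Ioo (-1 : ℝ) 1) = θs ∧
      sSup ((fun k => sInf {L : ℝ | 0 < L ∧ Fchar lam a b k L 0 = 0}) '' Set.Ioo (-1 : ℝ) 1) =
        Real.sqrt (lam / (a * b)) * θs) := by
  have hab : 0 < a * b := mul_pos_of_neg_of_neg ha hb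
  have habl : 0 < a * b / lam := div_pos hab hlam
  set ω := Real.sqrt (a * b / lam) with hωdef
  have hω : 0 < ω := Real.sqrt_pos.mpr habl
  -- `θ₀ k = π/2 - arctan (c k)` with `c k` the explicit quotient
  have hkey : ∀ k ∈ Set.Ioo (-1 : ℝ) 1,
      θ₀ k = Real.pi/2 - Real.arctan ((k * b / lam + a) / ((k - 1) * ω)) := by
    intro k hk
    have hp : (k - 1) * ω ≠ 0 := mul_ne_zero (by linarith [hk.2]) hω.ne'
    exact theta_eq_aux (hθ k hk).1 hp (hθ k hk).2
  -- monotonicity of the quotient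
  have hcmono : ∀ k1 k2 : ℝ, -1 ≤ k1 → k1 < k2 → k2 < 1 →
      (k1 * b / lam + a) / ((k1 - 1) * ω) < (k2 * b / lam + a) / ((k2 - 1) * ω) := by
    intro k1 k2 h1 h12 h2
    have hd1 : 0 < -((k1 - 1) * ω) := by nlinarith
    have hd2 : 0 < -((k2 - 1) * ω) := by nlinarith
    rw [show (k1 * b / lam + a) / ((k1 - 1) * ω)
        = (-(k1 * b / lam + a)) / (-((k1 - 1) * ω)) from (neg_div_neg_eq _ _).symm,
      show (k2 * b / lam + a) / ((k2 - 1) * ω)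
        = (-(k2 * b / lam + a)) / (-((k2 - 1) * ω)) from (neg_div_neg_eq _ _).symm,
      div_lt_div_iff₀ hd1 hd2]
    have hB : b / lam < 0 := div_neg_of_neg_of_pos hb hlam
    have hkey2 : -(k2 * b / lam + a) * -((k1 - 1) * ω) - -(k1 * b / lam + a) * -((k2 - 1) * ω)
        = (k2 - k1) * (-(b/lam) - a) * ω := by ring
    nlinarith [mul_pos (mul_pos (sub_pos.mpr h12)
      (show (0:ℝ) < -(b/lam) - a by linarith)) hω, hkey2]
  -- strict antitonicity
  have hanti : StrictAntiOn θ₀ (Set.Ioo (-1 : ℝ) 1) := by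
    intro k1 hk1 k2 hk2 h12
    rw [hkey k1 hk1, hkey k2 hk2]
    have := Real.arctan_strictMono (hcmono k1 k2 hk1.1.le h12 hk2.2)
    linarith
  -- θ*
  have hlab : 0 < lam * a * b := by nlinarith
  have hsqlab : 0 < Real.sqrt (lam * a * b) := Real.sqrt_pos.mpr hlab
  have hsqω : Real.sqrt (lam * a * b) = lam * ω := by
    have h1 : lam * a * b = lam^2 * (a * b / lam) := by field_simp
    rw [h1, Real.sqrt_mul (sq_nonneg lam), Real.sqrt_sq hlam.le, hωdef]
  set θstar := Real.pi/2 - Real.arctan ((b - lam * a) / (2 * Real.sqrt (lam * a * b))) with hθsdef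
  obtain ⟨hθsmem, hθseq⟩ := theta_sol_aux (2 * Real.sqrt (lam * a * b)) (b - lam * a)
    (by positivity)
  have huniq : ∀ θ ∈ Set.Ioo 0 Real.pi,
      Real.cos θ * (2 * Real.sqrt (lam * a * b)) = (b - lam * a) * Real.sin θ → θ = θstar := by
    intro θ hθ' heq
    exact theta_eq_aux hθ' (by positivity) (by linarith)
  have hexu : ∃! θs : ℝ, θs ∈ Set.Ioo 0 Real.pi ∧
      Real.cos θs * (2 * Real.sqrt (lam * a * b)) = (b - lam * a) * Real.sin θs := by
    refine ⟨θstar, ⟨hθsmem, by linarith⟩, fun θ hθ' => huniq θ hθ'.1 hθ'.2⟩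
  -- c(-1) = cstar
  have hc1 : (b - lam * a) / (2 * Real.sqrt (lam * a * b))
      = ((-1 : ℝ) * b / lam + a) / (((-1 : ℝ) - 1) * ω) := by
    rw [hsqω]
    field_simp
    ring
  -- IsLUB of θ₀-image
  have hlub : IsLUB (θ₀ '' Set.Ioo (-1 : ℝ) 1) θstar := by
    constructor
    · rintro x ⟨k, hk, rfl⟩
      rw [hkey k hk, hθsdef]
      have hlt := hcmono (-1) k le_rfl hk.1 hk.2
      rw [← hc1] at hlt
      have := Real.arctan_strictMono hlt
      linarith
    · intro u hu
      have hcont : ContinuousAt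
          (fun k : ℝ => Real.pi/2 - Real.arctan ((k * b / lam + a) / ((k - 1) * ω))) (-1) := by
        apply ContinuousAt.sub continuousAt_const
        apply Real.continuous_arctan.continuousAt.comp
        apply ContinuousAt.div (by fun_prop) (by fun_prop)
        show ((-1 : ℝ) - 1) * ω ≠ 0
        exact mul_ne_zero (by norm_num) hω.ne'
      have htend : Filter.Tendsto
          (fun k : ℝ => Real.pi/2 - Real.arctan ((k * b / lam + a) / ((k - 1) * ω)))
          (nhdsWithin (-1) (Set.Ioi (-1))) (nhds θstar) := by
        have := hcont.tendsto.mono_left (nhdsWithin_le_nhds (s := Set.Ioi (-1 : ℝ)))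
        simpa [hθsdef, hc1] using this
      have hev : ∀ᶠ k in nhdsWithin (-1 : ℝ) (Set.Ioi (-1)),
          Real.pi/2 - Real.arctan ((k * b / lam + a) / ((k - 1) * ω)) ≤ u := by
        filter_upwards [Ioo_mem_nhdsGT_of_mem
          (by constructor <;> norm_num : (-1 : ℝ) ∈ Set.Ico (-1 : ℝ) 1)] with k hk
        rw [← hkey k hk]
        exact hu ⟨k, hk, rfl⟩
      exact le_of_tendsto htend hev
  have hnonempty : (θ₀ '' Set.Ioo (-1 : ℝ) 1).Nonempty :=
    ⟨θ₀ 0, 0, by constructor <;> norm_num, rfl⟩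
  -- sInf of zero set
  have hsinf : ∀ k ∈ Set.Ioo (-1 : ℝ) 1,
      sInf {L : ℝ | 0 < L ∧ Fchar lam a b k L 0 = 0} = θ₀ k / ω := by
    intro k hk
    obtain ⟨hmem, heqk⟩ := hθ k hk
    have hp : (k - 1) * ω ≠ 0 := mul_ne_zero (by linarith [hk.2]) hω.ne'
    have hdesc : ∀ L : ℝ, Fchar lam a b k L 0 = 0 ↔
        (k - 1) * ω * Real.cos (ω * L) = (k * b / lam + a) * Real.sin (ω * L) := by
      intro L
      rw [fchar_zero lam a b hlam ha hb k L, ← hωdef, Complex.ofReal_eq_zero, sub_eq_zero,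
        eq_div_iff hω.ne']
      constructor <;> intro h <;> linear_combination h
    have hmemS : θ₀ k / ω ∈ {L : ℝ | 0 < L ∧ Fchar lam a b k L 0 = 0} := by
      refine ⟨div_pos hmem.1 hω, ?_⟩
      rw [hdesc]
      have : ω * (θ₀ k / ω) = θ₀ k := by field_simp
      rw [this]
      exact heqk
    have hlb : ∀ L ∈ {L : ℝ | 0 < L ∧ Fchar lam a b k L 0 = 0}, θ₀ k / ω ≤ L := by
      rintro L ⟨hL0, hLF⟩
      by_contra hlt
      push_neg at hlt
      have hωL : ω * L < θ₀ k := by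
        rw [mul_comm]; exact (lt_div_iff₀ hω).mp hlt
      have hωLmem : ω * L ∈ Set.Ioo 0 Real.pi :=
        ⟨mul_pos hω hL0, lt_trans hωL hmem.2⟩
      have heq2 := (hdesc L).mp hLF
      have := theta_eq_aux hωLmem hp heq2
      rw [← hkey k hk] at this
      linarith
    exact le_antisymm (csInf_le ⟨θ₀ k / ω, hlb⟩ hmemS) (le_csInf ⟨_, hmemS⟩ hlb)
  -- the scaled LUB
  have hωinv : Real.sqrt (lam / (a * b)) = ω⁻¹ := by
    rw [show lam / (a * b) = (a * b / lam)⁻¹ from (inv_div _ _).symm, Real.sqrt_inv, hωdef]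
  have hlub2 : IsLUB ((fun k => sInf {L : ℝ | 0 < L ∧ Fchar lam a b k L 0 = 0}) ''
      Set.Ioo (-1 : ℝ) 1) (θstar / ω) := by
    constructor
    · rintro x ⟨k, hk, rfl⟩
      simp only
      rw [hsinf k hk]
      have h1 : θ₀ k ≤ θstar := hlub.1 ⟨k, hk, rfl⟩
      gcongr
    · intro u hu
      rw [div_le_iff₀ hω]
      apply hlub.2
      rintro x ⟨k, hk, rfl⟩
      have h2 := hu ⟨k, hk, rfl⟩
      simp only at h2
      rw [hsinf k hk] at h2
      calc θ₀ k = (θ₀ k / ω) * ω := by field_simp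
        _ ≤ u * ω := mul_le_mul_of_nonneg_right h2 hω.le
  refine ⟨hanti, hexu, ?_⟩
  intro θs hθs1 hθs2
  have hθseq' : θs = θstar := huniq θs hθs1 hθs2
  subst hθseq'
  constructor
  · exact hlub.csSup_eq hnonempty
  · rw [hωinv]
    have := hlub2.csSup_eq ⟨_, ⟨0, by constructor <;> norm_num, rfl⟩⟩
    rw [this]
    rw [div_eq_inv_mul]
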